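/- Let A = {a₁, ..., a_k} be distinct integers with k = p^α for a prime p and positive integer α. For i ≠ j let e_{ij} be the largest integer with p^{e_{ij}} dividing a_i − a_j, and let S = {e_{ij} : i ≠ j}. Then A tiles ℤ by translations if and only if S has at most α distinct elements. -/

import Mathlib

/-- A finite set of integers tiles `ℤ` by translations: there is a translation set `T`
such that every integer is uniquely represented as `a + t` with `a ∈ A`, `t ∈ T`. -/
def TilesZ (A : Finset ℤ) : Prop :=
  ∃ T : Set ℤ, ∀ n : ℤ, ∃! q : ℤ × ℤ, q.1 ∈ A ∧ q.2 ∈ T ∧ q.1 + q.2 = n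

open Finset Polynomial

namespace Newman

def vS (p : ℕ) (A : Finset ℤ) : Finset ℕ :=
  ((A ×ˢ A).filter (fun q => q.1 ≠ q.2)).image (fun q => padicValInt p (q.1 - q.2))

lemma mem_vS {p : ℕ} {A : Finset ℤ} {e : ℕ} :
    e ∈ vS p A ↔ ∃ a ∈ A, ∃ b ∈ A, a ≠ b ∧ padicValInt p (a - b) = e := by
  simp only [vS, Finset.mem_image, Finset.mem_filter, Finset.mem_product]
  constructor
  · rintro ⟨⟨a, b⟩, ⟨⟨ha, hb⟩, hne⟩, h⟩
    exact ⟨a, ha, b, hb, hne, h⟩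
  · rintro ⟨a, ha, b, hb, hne, h⟩
    exact ⟨⟨a, b⟩, ⟨⟨ha, hb⟩, hne⟩, h⟩

lemma val_mem_vS {p : ℕ} {A : Finset ℤ} {a b : ℤ} (ha : a ∈ A) (hb : b ∈ A) (hab : a ≠ b) :
    padicValInt p (a - b) ∈ vS p A :=
  mem_vS.2 ⟨a, ha, b, hb, hab, rfl⟩

lemma val_dvd_iff {p : ℕ} (hp : p.Prime) {z : ℤ} (hz : z ≠ 0) (k : ℕ) :
    (p : ℤ) ^ k ∣ z ↔ k ≤ padicValInt p z := by
  haveI : Fact p.Prime := ⟨hp⟩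
  rw [padicValInt_dvd_iff]
  simp [hz]

def rr (p j : ℕ) (a : ℤ) : ℕ := (a % ((p : ℤ) ^ j)).toNat

lemma rr_cast {p : ℕ} (hp : 0 < p) (j : ℕ) (a : ℤ) : ((rr p j a : ℤ)) = a % ((p:ℤ)^j) := by
  have h : (0:ℤ) < (p:ℤ)^j := by positivity
  have := Int.emod_nonneg a h.ne'
  unfold rr
  omega

lemma rr_lt {p : ℕ} (hp : 0 < p) (j : ℕ) (a : ℤ) : rr p j a < p ^ j := by
  have h : (0:ℤ) < (p:ℤ)^j := by positivity
  have h2 := Int.emod_lt_of_pos a h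
  have h3 := rr_cast hp j a
  have h4 : ((p ^ j : ℕ) : ℤ) = (p:ℤ)^j := by push_cast; rfl
  omega

lemma rr_eq_iff {p : ℕ} (hp : 0 < p) {j : ℕ} {a b : ℤ} :
    rr p j a = rr p j b ↔ (p:ℤ)^j ∣ a - b := by
  rw [Int.dvd_iff_emod_eq_zero, ← Int.emod_eq_emod_iff_emod_sub_eq_zero]
  have ha := rr_cast hp j a
  have hb := rr_cast hp j b
  omega

lemma rr_mod {p : ℕ} (hp : 0 < p) {i j : ℕ} (hij : i ≤ j) (a : ℤ) :
    rr p i a = rr p j a % p ^ i := by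
  have h1 : (a % (p:ℤ)^j) % (p:ℤ)^i = a % (p:ℤ)^i := Int.emod_emod_of_dvd a (pow_dvd_pow _ hij)
  apply Int.natCast_inj.mp
  have : ((rr p j a % p ^ i : ℕ) : ℤ) = (a % (p:ℤ)^j) % ((p:ℤ)^i) := by
    push_cast [rr_cast hp j a]; ring_nf
  rw [rr_cast hp i a, this, h1]

lemma rr_eq_iff_val {p : ℕ} (hp : p.Prime) {a b : ℤ} (hab : a ≠ b) (j : ℕ) :
    rr p j a = rr p j b ↔ j ≤ padicValInt p (a - b) := by
  rw [rr_eq_iff hp.pos, val_dvd_iff hp (sub_ne_zero.2 hab)]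

def Rset (p : ℕ) (A : Finset ℤ) (j : ℕ) : Finset ℕ := A.image (rr p j)

lemma Rset_image {p : ℕ} (hp : 0 < p) (A : Finset ℤ) (j : ℕ) :
    Rset p A j = (Rset p A (j+1)).image (· % p ^ j) := by
  unfold Rset
  rw [Finset.image_image]
  apply Finset.image_congr
  intro a _
  exact rr_mod hp (Nat.le_succ j) a

lemma ell_mono {p : ℕ} (hp : 0 < p) (A : Finset ℤ) (j : ℕ) :
    (Rset p A j).card ≤ (Rset p A (j+1)).card := by
  rw [Rset_image hp]
  exact Finset.card_image_le

lemma ell_le_mul {p : ℕ} (hp : 0 < p) (A : Finset ℤ) (j : ℕ) :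
    (Rset p A (j+1)).card ≤ (Rset p A j).card * p := by
  have h : (Rset p A (j+1)).card ≤ ((Rset p A j) ×ˢ (range p)).card := by
    apply Finset.card_le_card_of_injOn (fun x => (x % p ^ j, x / p ^ j))
    · intro x hx
      simp only [Rset, Finset.mem_coe, Finset.mem_image] at hx
      obtain ⟨a, ha, rfl⟩ := hx
      rw [Finset.mem_coe, Finset.mem_product]
      constructor
      · simp only [Rset, Finset.mem_image]
        exact ⟨a, ha, rr_mod hp (Nat.le_succ j) a⟩
      · rw [Finset.mem_range]
        have := rr_lt hp (j+1) a
        have hpj : 0 < p ^ j := Nat.pow_pos (n := j) hp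
        rw [Nat.div_lt_iff_lt_mul hpj, mul_comm]
        calc rr p (j+1) a < p ^ (j+1) := this
        _ = p ^ j * p := pow_succ p j
    · intro x _ y _ hxy
      simp only [Prod.mk.injEq] at hxy
      rw [← Nat.div_add_mod x (p ^ j), ← Nat.div_add_mod y (p ^ j), hxy.1, hxy.2]
  simpa [Finset.card_product] using h

lemma ell_le_of_not_mem {p : ℕ} (hp : p.Prime) (A : Finset ℤ) {j : ℕ} (hj : j ∉ vS p A) :
    (Rset p A (j+1)).card ≤ (Rset p A j).card := by
  have hinj : Set.InjOn (· % p ^ j) (Rset p A (j+1)) := by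
    intro x hx y hy hxy
    simp only [Rset, Finset.coe_image, Set.mem_image, Finset.mem_coe] at hx hy
    obtain ⟨a, ha, rfl⟩ := hx
    obtain ⟨b, hb, rfl⟩ := hy
    simp only at hxy
    rw [← rr_mod hp.pos (Nat.le_succ j), ← rr_mod hp.pos (Nat.le_succ j)] at hxy
    by_contra hne
    have hab : a ≠ b := fun h => hne (by rw [h])
    have h1 : j ≤ padicValInt p (a - b) := (rr_eq_iff_val hp hab j).1 hxy
    have h2 : ¬ (j + 1 ≤ padicValInt p (a - b)) := fun h => hne ((rr_eq_iff_val hp hab (j+1)).2 h)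
    have : padicValInt p (a - b) = j := by omega
    exact hj (this ▸ val_mem_vS ha hb hab)
  rw [Rset_image hp.pos A j, Finset.card_image_of_injOn hinj]

lemma ell_lt_of_mem {p : ℕ} (hp : p.Prime) (A : Finset ℤ) {j : ℕ} (hj : j ∈ vS p A) :
    (Rset p A j).card + 1 ≤ (Rset p A (j+1)).card := by
  obtain ⟨a, ha, b, hb, hab, hv⟩ := mem_vS.1 hj
  have hxy : rr p j a = rr p j b := (rr_eq_iff_val hp hab j).2 (le_of_eq hv.symm)
  have hne : rr p (j+1) a ≠ rr p (j+1) b := by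
    intro h
    have := (rr_eq_iff_val hp hab (j+1)).1 h
    omega
  have hmem : rr p (j+1) a ∈ Rset p A (j+1) := Finset.mem_image_of_mem _ ha
  have hmem' : rr p (j+1) b ∈ Rset p A (j+1) := Finset.mem_image_of_mem _ hb
  have himg : Rset p A j = ((Rset p A (j+1)).erase (rr p (j+1) a)).image (· % p ^ j) := by
    rw [Rset_image hp.pos]
    apply Finset.Subset.antisymm
    · intro z hz
      rw [Finset.mem_image] at hz
      obtain ⟨x, hx, rfl⟩ := hz
      by_cases hxa : x = rr p (j+1) a
      · subst hxa
        have heq : rr p (j+1) a % p ^ j = rr p (j+1) b % p ^ j := by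
          rw [← rr_mod hp.pos (Nat.le_succ j), ← rr_mod hp.pos (Nat.le_succ j), hxy]
        rw [heq]
        exact Finset.mem_image_of_mem _ (Finset.mem_erase.2 ⟨hne.symm, hmem'⟩)
      · exact Finset.mem_image_of_mem _ (Finset.mem_erase.2 ⟨hxa, hx⟩)
    · exact Finset.image_subset_image (Finset.erase_subset _ _)
  have h1 : (Rset p A j).card ≤ ((Rset p A (j+1)).erase (rr p (j+1) a)).card :=
    himg ▸ Finset.card_image_le
  have h2 := Finset.card_erase_of_mem hmem
  have h3 : 0 < (Rset p A (j+1)).card := Finset.card_pos.2 ⟨_, hmem⟩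
  omega

def cnt (p : ℕ) (A : Finset ℤ) (j : ℕ) (σ : ℕ) : ℕ :=
  (A.filter (fun a => rr p j a = σ)).card

/-- Balancedness at level `j`: counts mod `p^(j+1)` depend only on the residue mod `p^j`. -/

def Bal (p : ℕ) (A : Finset ℤ) (j : ℕ) : Prop :=
  ∀ σ τ : ℕ, σ < p ^ (j+1) → τ < p ^ (j+1) → σ % p ^ j = τ % p ^ j →
    cnt p A (j+1) σ = cnt p A (j+1) τ

lemma decomp_lt {p j i x : ℕ} (hi : i < p) (hx : x < p ^ j) : i * p ^ j + x < p ^ (j+1) := by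
  have hps : p ^ (j+1) = p ^ j * p := pow_succ p j
  calc i * p ^ j + x < i * p ^ j + p ^ j := by omega
  _ = (i+1) * p ^ j := by ring
  _ ≤ p * p ^ j := Nat.mul_le_mul_right _ (by omega)
  _ = p ^ (j+1) := by rw [hps]; ring

lemma decomp_mod {p j i x : ℕ} (hx : x < p ^ j) : (i * p ^ j + x) % p ^ j = x := by
  rw [add_comm, Nat.add_mul_mod_self_right]
  exact Nat.mod_eq_of_lt hx

lemma cnt_pos_iff {p : ℕ} {A : Finset ℤ} {j σ : ℕ} :
    0 < cnt p A j σ ↔ σ ∈ Rset p A j := by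
  rw [cnt, Finset.card_pos]
  constructor
  · rintro ⟨a, ha⟩
    rw [Finset.mem_filter] at ha
    exact ha.2 ▸ Finset.mem_image_of_mem _ ha.1
  · intro h
    rw [Rset, Finset.mem_image] at h
    obtain ⟨a, ha, rfl⟩ := h
    exact ⟨a, Finset.mem_filter.2 ⟨ha, rfl⟩⟩

lemma ell_full_of_bal {p : ℕ} (hp : p.Prime) {A : Finset ℤ} {j : ℕ} (hb : Bal p A j) :
    (Rset p A j).card * p ≤ (Rset p A (j+1)).card := by
  have hpj : 0 < p ^ j := Nat.pow_pos (n := j) hp.pos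
  have key : ∀ x ∈ Rset p A j, ∀ i < p, i * p ^ j + x ∈ Rset p A (j+1) := by
    intro x hx i hi
    obtain ⟨a, ha, rfl⟩ := Finset.mem_image.1 hx
    have h1 : rr p (j+1) a ∈ Rset p A (j+1) := Finset.mem_image_of_mem _ ha
    have hlt : rr p (j+1) a < p ^ (j+1) := rr_lt hp.pos _ a
    have hx' : rr p j a < p ^ j := rr_lt hp.pos _ a
    have hmodeq : (i * p ^ j + rr p j a) % p ^ j = rr p (j+1) a % p ^ j := by
      rw [← rr_mod hp.pos (Nat.le_succ j) a]
      exact decomp_mod hx'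
    have hlt2 : i * p ^ j + rr p j a < p ^ (j+1) := decomp_lt hi hx'
    have := hb _ _ hlt2 hlt hmodeq
    rw [← cnt_pos_iff, this]
    exact cnt_pos_iff.2 h1
  have hcard : (Rset p A j).card * p = ((Rset p A j) ×ˢ (range p)).card := by
    rw [Finset.card_product, Finset.card_range]
  rw [hcard]
  apply Finset.card_le_card_of_injOn (fun q : ℕ × ℕ => q.2 * p ^ j + q.1)
  · rintro ⟨x, i⟩ hq
    rw [Finset.mem_coe, Finset.mem_product, Finset.mem_range] at hq
    exact key x hq.1 i hq.2
  · rintro ⟨x, i⟩ hq ⟨y, i'⟩ hq' heq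
    simp only [Finset.coe_product, Set.mem_prod, Finset.mem_coe, Finset.mem_range] at hq hq'
    simp only at heq
    have hx : x < p ^ j := by
      obtain ⟨a, _, rfl⟩ := Finset.mem_image.1 hq.1
      exact rr_lt hp.pos _ a
    have hy : y < p ^ j := by
      obtain ⟨a, _, rfl⟩ := Finset.mem_image.1 hq'.1
      exact rr_lt hp.pos _ a
    have h1 : x = y := by
      have e1 : (i * p ^ j + x) % p ^ j = x := decomp_mod hx
      have e2 : (i' * p ^ j + y) % p ^ j = y := decomp_mod hy
      rw [← e1, ← e2, heq]
    have h2 : i = i' := by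
      subst h1
      have : i * p ^ j = i' * p ^ j := by omega
      exact Nat.eq_of_mul_eq_mul_right hpj this
    rw [h1, h2]

lemma mem_vS_of_bal {p : ℕ} (hp : p.Prime) {A : Finset ℤ} {j : ℕ} (hA : A.Nonempty)
    (hb : Bal p A j) : j ∈ vS p A := by
  obtain ⟨a, ha⟩ := hA
  have hlt : rr p (j+1) a < p ^ (j+1) := rr_lt hp.pos _ a
  have hx : rr p j a < p ^ j := rr_lt hp.pos _ a
  have hpj : 0 < p ^ j := Nat.pow_pos (n := j) hp.pos
  set i₀ := rr p (j+1) a / p ^ j with hi₀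
  have hdecomp : rr p (j+1) a = i₀ * p ^ j + rr p j a := by
    rw [rr_mod hp.pos (Nat.le_succ j) a, hi₀, mul_comm]
    exact (Nat.div_add_mod _ _).symm
  set i₁ : ℕ := if i₀ = 0 then 1 else 0 with hi₁
  have hi1p : i₁ < p := by
    rw [hi₁]; split <;> [exact hp.one_lt; exact hp.pos]
  have hine : i₁ ≠ i₀ := by rw [hi₁]; split <;> omega
  have hτlt : i₁ * p ^ j + rr p j a < p ^ (j+1) := decomp_lt hi1p hx
  have hmodeq : (i₁ * p ^ j + rr p j a) % p ^ j = rr p (j+1) a % p ^ j := by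
    rw [← rr_mod hp.pos (Nat.le_succ j) a]
    exact decomp_mod hx
  have hc : cnt p A (j+1) (i₁ * p ^ j + rr p j a) = cnt p A (j+1) (rr p (j+1) a) :=
    hb _ _ hτlt hlt hmodeq
  have hpos : 0 < cnt p A (j+1) (rr p (j+1) a) :=
    cnt_pos_iff.2 (Finset.mem_image_of_mem _ ha)
  rw [← hc] at hpos
  obtain ⟨b, hbmem⟩ := Finset.card_pos.1 hpos
  rw [Finset.mem_filter] at hbmem
  obtain ⟨hbA, hbτ⟩ := hbmem
  have hne : rr p (j+1) b ≠ rr p (j+1) a := by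
    rw [hbτ, hdecomp]
    intro h
    have h' : i₁ * p ^ j = i₀ * p ^ j := by omega
    exact hine (Nat.eq_of_mul_eq_mul_right hpj h')
  have hab : a ≠ b := fun h => hne (by rw [h])
  have hj1 : rr p j a = rr p j b := by
    rw [rr_mod hp.pos (Nat.le_succ j) b, hbτ, decomp_mod hx]
  have h1 : j ≤ padicValInt p (a - b) := (rr_eq_iff_val hp hab j).1 hj1
  have h2 : ¬ (j + 1 ≤ padicValInt p (a - b)) := fun h =>
    hne.symm ((rr_eq_iff_val hp hab (j+1)).2 h)
  have : padicValInt p (a - b) = j := by omega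
  exact this ▸ val_mem_vS ha hbA hab

lemma ell_zero {p : ℕ} {A : Finset ℤ} (hA : A.Nonempty) : (Rset p A 0).card = 1 := by
  have : Rset p A 0 = {0} := by
    apply Finset.eq_singleton_iff_nonempty_unique_mem.2
    refine ⟨hA.image _, ?_⟩
    intro x hx
    obtain ⟨a, _, rfl⟩ := Finset.mem_image.1 hx
    simp [rr]
  rw [this, Finset.card_singleton]

lemma ell_top {p : ℕ} (hp : p.Prime) {A : Finset ℤ} {E : ℕ} (hE : ∀ e ∈ vS p A, e ≤ E) :
    (Rset p A (E+1)).card = A.card := by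
  apply Finset.card_image_of_injOn
  intro a ha b hb hab
  by_contra hne
  have h := (rr_eq_iff_val hp hne (E+1)).1 hab
  have := hE _ (val_mem_vS ha hb hne)
  omega

lemma inter_range_succ_card {J : Finset ℕ} {j : ℕ} :
    (J ∩ range (j+1)).card = (J ∩ range j).card + (if j ∈ J then 1 else 0) := by
  rw [Finset.range_add_one]
  by_cases h : j ∈ J
  · rw [Finset.inter_insert_of_mem h, Finset.card_insert_of_notMem, if_pos h]
    simp
  · rw [Finset.inter_insert_of_notMem h, if_neg h]
    omega

/-- Part 1: the valuation set has at least `α` elements. -/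

lemma alpha_le_card_vS {p α : ℕ} (hp : p.Prime) {A : Finset ℤ} (hA : A.Nonempty) {E : ℕ}
    (hE : ∀ e ∈ vS p A, e ≤ E) (hcard : A.card = p ^ α) : α ≤ (vS p A).card := by
  have claim : ∀ j, (Rset p A j).card ≤ p ^ ((vS p A ∩ range j).card) := by
    intro j
    induction j with
    | zero => simp [ell_zero hA]
    | succ j ih =>
      rw [inter_range_succ_card]
      by_cases h : j ∈ vS p A
      · rw [if_pos h, pow_succ]
        exact le_trans (ell_le_mul hp.pos A j) (Nat.mul_le_mul_right p ih)
      · rw [if_neg h]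
        simpa using le_trans (ell_le_of_not_mem hp A h) ih
  have h1 := claim (E+1)
  rw [ell_top hp hE, hcard] at h1
  have h2 : vS p A ∩ range (E+1) = vS p A := by
    apply Finset.inter_eq_left.2
    intro e he
    rw [Finset.mem_range]
    exact Nat.lt_succ_of_le (hE e he)
  rw [h2] at h1
  exact (Nat.pow_le_pow_iff_right hp.one_lt).1 h1

/-- The key counting for necessity. -/

lemma necessity_count {p : ℕ} (hp : p.Prime) {A : Finset ℤ} {E : ℕ}
    {J' : Finset ℕ} (hbal : ∀ j ∈ J', (Rset p A j).card * p ≤ (Rset p A (j+1)).card)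
    {e : ℕ} (he : e ∈ vS p A) (heJ : e ∉ J') (heE : e ≤ E) :
    1 + p ^ J'.card ≤ (Rset p A (E+1)).card ∨ ¬ (J' ⊆ range (E+1)) := by
  by_cases hsub : J' ⊆ range (E+1)
  · left
    have claim : ∀ j, j ≤ E + 1 →
        (if e < j then 1 else 0) + p ^ ((J' ∩ range j).card) ≤ (Rset p A j).card := by
      intro j
      induction j with
      | zero =>
        intro _
        have h0 : 0 < (Rset p A 0).card := by
          rcases Finset.eq_empty_or_nonempty A with h | h
          · exfalso
            rw [vS, h] at he
            simp at he
          · rw [ell_zero h]; omega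
        simpa using h0
      | succ j ih =>
        intro hj
        have ihj := ih (by omega)
        rw [inter_range_succ_card]
        by_cases hmem : j ∈ J'
        · have hne : j ≠ e := fun h => heJ (h ▸ hmem)
          rw [if_pos hmem]
          have hb := hbal j hmem
          set c := (J' ∩ range j).card
          set L := (Rset p A j).card
          have h2 : ((if e < j then 1 else 0) + p ^ c) * p ≤ L * p :=
            Nat.mul_le_mul_right p ihj
          have h3 : (if e < j + 1 then 1 else 0) + p ^ (c + 1) ≤
              ((if e < j then 1 else 0) + p ^ c) * p := by
            rw [add_mul, pow_succ]
            have hp1 : 1 ≤ p := hp.pos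
            by_cases hcase : e < j
            · rw [if_pos hcase, if_pos (by omega)]
              nlinarith
            · rw [if_neg hcase, if_neg (by omega)]
              nlinarith
          omega
        · rw [if_neg hmem, add_zero]
          by_cases hej : j = e
          · have hjvs : j ∈ vS p A := by rw [hej]; exact he
            have hlt := ell_lt_of_mem hp A hjvs
            rw [if_pos (by omega)]
            rw [if_neg (by omega)] at ihj
            omega
          · have hmono := ell_mono hp.pos A j
            by_cases hcase : e < j
            · rw [if_pos (by omega)]
              rw [if_pos hcase] at ihj
              omega
            · rw [if_neg (by omega)]
              rw [if_neg hcase] at ihj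
              omega
    have h := claim (E+1) le_rfl
    have h2 : J' ∩ range (E+1) = J' := Finset.inter_eq_left.2 hsub
    rw [h2, if_pos (by omega)] at h
    exact h
  · right; exact hsub

/-- digit at a lower position ignores high part -/

lemma digit_add_high {p : ℕ} (hp : 0 < p) {e m : ℕ} (he : e < m) (d v : ℕ) :
    (d * p ^ m + v) / p ^ e % p = v / p ^ e % p := by
  have hdvd : p ^ e ∣ d * p ^ m := Dvd.dvd.mul_left (pow_dvd_pow p he.le) d
  rw [Nat.add_div_of_dvd_right hdvd]
  have : d * p ^ m / p ^ e = d * p ^ (m - e) := by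
    rw [Nat.mul_div_assoc d (pow_dvd_pow p he.le), Nat.pow_div he.le hp]
  rw [this]
  have h1 : 1 ≤ m - e := by omega
  have : d * p ^ (m - e) = d * p ^ (m - e - 1) * p := by
    rw [mul_assoc, ← pow_succ]
    congr 2
    omega
  rw [this, add_comm, Nat.add_mul_mod_self_right]

/-- cardinality of the set of `r < p^m` with zero digits at positions in `Q` -/

lemma count_digits {p : ℕ} (hp : 2 ≤ p) : ∀ (m : ℕ) (Q : Finset ℕ), (∀ e ∈ Q, e < m) →
    ((range (p^m)).filter (fun r => ∀ e ∈ Q, r / p^e % p = 0)).card = p^(m - Q.card) := by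
  intro m
  induction m with
  | zero =>
    intro Q hQ
    have hQ0 : Q = ∅ := Finset.eq_empty_of_forall_notMem (fun e he => by have := hQ e he; omega)
    subst hQ0
    rw [Finset.filter_true_of_mem (fun _ _ => by simp)]
    simp
  | succ m ih =>
    intro Q hQ
    have hppos : 0 < p := by omega
    have hpm : 0 < p ^ m := Nat.pow_pos (n := m) hppos
    have hQsub : Q ⊆ range (m+1) := fun e he => Finset.mem_range.2 (hQ e he)
    have hQcard : Q.card ≤ m + 1 := by
      calc Q.card ≤ (range (m+1)).card := Finset.card_le_card hQsub
      _ = m + 1 := Finset.card_range _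
    have herase : ∀ e ∈ Q.erase m, e < m := by
      intro e he
      rw [Finset.mem_erase] at he
      have := hQ e he.2
      omega
    have hih := ih (Q.erase m) herase
    have hkey : ((range (p^(m+1))).filter (fun r => ∀ e ∈ Q, r / p^e % p = 0)) =
        ((if m ∈ Q then ({0} : Finset ℕ) else range p) ×ˢ
          ((range (p^m)).filter (fun r => ∀ e ∈ Q.erase m, r / p^e % p = 0))).image
          (fun q => q.1 * p^m + q.2) := by
      ext r
      simp only [Finset.mem_filter, Finset.mem_range, Finset.mem_image, Finset.mem_product]
      constructor
      · rintro ⟨hr, hdig⟩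
        refine ⟨(r / p^m, r % p^m), ⟨?_, ?_, ?_⟩, ?_⟩
        · by_cases hm : m ∈ Q
          · rw [if_pos hm]
            have h0 : r / p^m % p = 0 := hdig m hm
            have hd : r / p^m < p := by
              rw [Nat.div_lt_iff_lt_mul hpm]
              calc r < p ^ (m+1) := hr
              _ = p * p ^ m := by rw [pow_succ]; ring
            rw [Nat.mod_eq_of_lt hd] at h0
            simp [h0]
          · rw [if_neg hm, Finset.mem_range, Nat.div_lt_iff_lt_mul hpm]
            calc r < p ^ (m+1) := hr
            _ = p * p ^ m := by rw [pow_succ]; ring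
        · exact Nat.mod_lt r hpm
        · intro e he
          rw [Finset.mem_erase] at he
          have hlt : e < m := by have := hQ e he.2; omega
          have := hdig e he.2
          rw [← this]
          conv_rhs => rw [← Nat.div_add_mod r (p^m)]
          rw [mul_comm (p ^ m) (r / p ^ m)]
          exact (digit_add_high hppos hlt _ _).symm
        · simp only
          rw [mul_comm]
          exact Nat.div_add_mod r (p^m)
      · rintro ⟨⟨d, v⟩, ⟨hd, hv, hdig⟩, rfl⟩
        have hdp : d < p := by
          by_cases hm : m ∈ Q
          · rw [if_pos hm, Finset.mem_singleton] at hd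
            omega
          · rw [if_neg hm, Finset.mem_range] at hd
            exact hd
        constructor
        · exact decomp_lt hdp hv
        · intro e he
          by_cases hem : e = m
          · have hm : m ∈ Q := hem ▸ he
            rw [if_pos hm, Finset.mem_singleton] at hd
            subst hd
            simp only [zero_mul, zero_add]
            have h0 : v / p ^ e = 0 := Nat.div_eq_of_lt (by rw [hem]; exact hv)
            rw [h0, Nat.zero_mod]
          · have hlt : e < m := by have := hQ e he; omega
            rw [digit_add_high hppos hlt d v]
            exact hdig e (Finset.mem_erase.2 ⟨hem, he⟩)
    rw [hkey, Finset.card_image_of_injOn, Finset.card_product, hih]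
    · by_cases hm : m ∈ Q
      · rw [if_pos hm, Finset.card_singleton, one_mul, Finset.card_erase_of_mem hm]
        congr 1
        have h1 : 1 ≤ Q.card := Finset.card_pos.2 ⟨m, hm⟩
        omega
      · rw [if_neg hm, Finset.card_range, Finset.erase_eq_of_notMem hm]
        rw [← pow_succ']
        congr 1
        have : Q.card ≤ m := by
          have : Q ⊆ range m := by
            intro e he
            rw [Finset.mem_range]
            have := hQ e he
            have : e ≠ m := fun h => hm (h ▸ he)
            omega
          calc Q.card ≤ (range m).card := Finset.card_le_card this
          _ = m := Finset.card_range _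
        omega
    · rintro ⟨d, v⟩ hq ⟨d', v'⟩ hq' heq
      simp only [Finset.coe_product, Set.mem_prod, Finset.mem_coe, Finset.mem_filter,
        Finset.mem_range] at hq hq'
      simp only at heq
      have hv : v < p ^ m := hq.2.1
      have hv' : v' < p ^ m := hq'.2.1
      have h1 : v = v' := by
        have e1 : (d * p ^ m + v) % p ^ m = v := by
          rw [add_comm, Nat.add_mul_mod_self_right]; exact Nat.mod_eq_of_lt hv
        have e2 : (d' * p ^ m + v') % p ^ m = v' := by
          rw [add_comm, Nat.add_mul_mod_self_right]; exact Nat.mod_eq_of_lt hv'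
        rw [← e1, ← e2, heq]
      have h2 : d = d' := by
        subst h1
        have : d * p ^ m = d' * p ^ m := by omega
        exact Nat.eq_of_mul_eq_mul_right hpm this
      rw [h1, h2]


lemma rr_natCast {p : ℕ} (hp : 0 < p) {m r : ℕ} (hr : r < p ^ m) : rr p m (r : ℤ) = r := by
  have h1 : ((r:ℤ)) % ((p:ℤ)^m) = r := by
    apply Int.emod_eq_of_lt (by positivity)
    exact_mod_cast hr
  unfold rr
  rw [h1]
  exact Int.toNat_natCast r

/-- the digit-zero step lemma -/

lemma digit_step {p : ℕ} (hp : p.Prime) {E e : ℕ} (he : e ≤ E) {t t' : ℤ}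
    (ht : rr p (E+1) t / p ^ e % p = 0) (ht' : rr p (E+1) t' / p ^ e % p = 0)
    (hdvd : (p:ℤ)^e ∣ t - t') : (p:ℤ)^(e+1) ∣ t - t' := by
  set r := rr p (E+1) t with hr
  set r' := rr p (E+1) t' with hr'
  have hre : rr p e t = rr p e t' := (rr_eq_iff hp.pos).2 hdvd
  have h1 : r % p ^ e = r' % p ^ e := by
    rw [← rr_mod hp.pos (by omega : e ≤ E + 1) t, ← rr_mod hp.pos (by omega : e ≤ E + 1) t', hre]
  have hsucc : ∀ x : ℕ, x % p ^ (e+1) = x % p ^ e + p ^ e * (x / p ^ e % p) := by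
    intro x
    rw [pow_succ]
    exact Nat.mod_mul
  have h2 : r % p ^ (e+1) = r' % p ^ (e+1) := by
    rw [hsucc r, hsucc r', ht, ht', h1]
  have h3 : rr p (e+1) t = rr p (e+1) t' := by
    rw [rr_mod hp.pos (by omega : e + 1 ≤ E + 1) t, rr_mod hp.pos (by omega : e + 1 ≤ E + 1) t']
    exact h2
  exact (rr_eq_iff hp.pos).1 h3

theorem sufficiency {p α : ℕ} (hp : p.Prime) (hα : 0 < α) {A : Finset ℤ}
    (hcard : A.card = p ^ α) (hS : (vS p A).card ≤ α) : TilesZ A := by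
  have hA : A.Nonempty := Finset.card_pos.1 (by rw [hcard]; exact Nat.pow_pos (n := α) hp.pos)
  have h2card : 1 < A.card := by
    rw [hcard]
    calc 1 < p := hp.one_lt
    _ = p ^ 1 := (pow_one p).symm
    _ ≤ p ^ α := Nat.pow_le_pow_right hp.pos hα
  obtain ⟨a₀, ha₀, b₀, hb₀, hab₀⟩ := Finset.one_lt_card.1 h2card
  have hSne : (vS p A).Nonempty := ⟨_, val_mem_vS ha₀ hb₀ hab₀⟩
  set E := (vS p A).max' hSne with hE
  have hEle : ∀ e ∈ vS p A, e ≤ E := fun e he => Finset.le_max' _ e he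
  have hsα : (vS p A).card = α := le_antisymm hS (alpha_le_card_vS hp hA hEle hcard)
  set P := p ^ (E+1) with hP
  -- the tiling set
  refine ⟨{t : ℤ | ∀ e ∈ vS p A, rr p (E+1) t / p ^ e % p = 0}, ?_⟩
  have uniq : ∀ n : ℤ, ∀ q q' : ℤ × ℤ,
      (q.1 ∈ A ∧ (∀ e ∈ vS p A, rr p (E+1) q.2 / p ^ e % p = 0) ∧ q.1 + q.2 = n) →
      (q'.1 ∈ A ∧ (∀ e ∈ vS p A, rr p (E+1) q'.2 / p ^ e % p = 0) ∧ q'.1 + q'.2 = n) →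
      q = q' := by
    rintro n ⟨a, t⟩ ⟨a', t'⟩ ⟨haA, htT, hat⟩ ⟨haA', htT', hat'⟩
    simp only at haA htT hat haA' htT' hat'
    by_cases haa : a = a'
    · subst haa
      have : t = t' := by omega
      rw [this]
    · exfalso
      set e := padicValInt p (a - a') with he
      have hevs : e ∈ vS p A := val_mem_vS haA haA' haa
      have heE : e ≤ E := hEle e hevs
      have hsub : a - a' ≠ 0 := sub_ne_zero.2 haa
      have hdvd1 : (p:ℤ)^e ∣ a - a' := (val_dvd_iff hp hsub e).2 le_rfl
      have htt' : t - t' = -(a - a') := by omega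
      have hdvd2 : (p:ℤ)^e ∣ t - t' := by rw [htt']; exact dvd_neg.2 hdvd1
      have hdvd3 := digit_step hp heE (htT e hevs) (htT' e hevs) hdvd2
      rw [htt', dvd_neg] at hdvd3
      have := (val_dvd_iff hp hsub (e+1)).1 hdvd3
      omega
  -- existence via finite counting
  have hppos := hp.pos
  set T₀ : Finset ℕ := (range P).filter (fun r => ∀ e ∈ vS p A, r / p ^ e % p = 0) with hT₀
  have hT₀card : T₀.card = p ^ ((E+1) - α) := by
    rw [hT₀, count_digits hp.two_le (E+1) (vS p A) (fun e he => by have := hEle e he; omega), hsα]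
  have hαle : α ≤ E + 1 := by
    rw [← hsα]
    calc (vS p A).card ≤ (range (E+1)).card :=
      Finset.card_le_card (fun e he => Finset.mem_range.2 (by have := hEle e he; omega))
    _ = E + 1 := Finset.card_range _
  have hprodcard : (A ×ˢ T₀).card = P := by
    rw [Finset.card_product, hcard, hT₀card, ← pow_add, hP]
    congr 1
    omega
  -- injectivity of  (a, r) ↦ rr (a + r)
  have hinj : ∀ q ∈ A ×ˢ T₀, ∀ q' ∈ A ×ˢ T₀,
      rr p (E+1) (q.1 + q.2) = rr p (E+1) (q'.1 + q'.2) → q = q' := by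
    rintro ⟨a, r⟩ hq ⟨a', r'⟩ hq' heq
    rw [Finset.mem_product] at hq hq'
    simp only at heq
    obtain ⟨haA, hrT⟩ := hq
    obtain ⟨haA', hrT'⟩ := hq'
    rw [hT₀, Finset.mem_filter, Finset.mem_range] at hrT hrT'
    have hdvdP : ((p:ℤ))^(E+1) ∣ (a + r) - (a' + r') := (rr_eq_iff hppos).1 heq
    by_cases haa : a = a'
    · subst haa
      have hdvd : ((p:ℤ))^(E+1) ∣ (r:ℤ) - r' := by
        have : (a + r) - (a + r') = (r:ℤ) - r' := by ring
        rwa [this] at hdvdP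
      have hrr : (r:ℤ) - r' = 0 := by
        apply Int.eq_zero_of_abs_lt_dvd hdvd
        have h1 : (r:ℤ) < (p:ℤ)^(E+1) := by exact_mod_cast (by exact_mod_cast hrT.1 : r < P)
        have h2 : (r':ℤ) < (p:ℤ)^(E+1) := by exact_mod_cast (by exact_mod_cast hrT'.1 : r' < P)
        rw [abs_lt]
        constructor <;> [linarith [Int.natCast_nonneg r, Int.natCast_nonneg r']; linarith [Int.natCast_nonneg r, Int.natCast_nonneg r']]
      have : r = r' := by exact_mod_cast sub_eq_zero.1 hrr
      rw [this]
    · exfalso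
      set e := padicValInt p (a - a') with he
      have hevs : e ∈ vS p A := val_mem_vS haA haA' haa
      have heE : e ≤ E := hEle e hevs
      have hsubne : a - a' ≠ 0 := sub_ne_zero.2 haa
      have hdvd1 : (p:ℤ)^e ∣ a - a' := (val_dvd_iff hp hsubne e).2 le_rfl
      have hdvd2 : (p:ℤ)^e ∣ (r:ℤ) - r' := by
        have hle : (p:ℤ)^e ∣ (p:ℤ)^(E+1) := pow_dvd_pow _ (by omega)
        have h3 : ((r:ℤ) - r') = ((a + r) - (a' + r')) - (a - a') := by ring
        rw [h3]
        exact dvd_sub (hle.trans hdvdP) hdvd1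
      have hd1 : rr p (E+1) ((r:ℤ)) / p ^ e % p = 0 := by
        rw [rr_natCast hppos (by exact hrT.1 : r < p ^ (E+1))]
        exact hrT.2 e hevs
      have hd2 : rr p (E+1) ((r':ℤ)) / p ^ e % p = 0 := by
        rw [rr_natCast hppos (by exact hrT'.1 : r' < p ^ (E+1))]
        exact hrT'.2 e hevs
      have hdvd3 := digit_step hp heE hd1 hd2 hdvd2
      have hdvd4 : (p:ℤ)^(e+1) ∣ a - a' := by
        have h3 : a - a' = ((a + r) - (a' + r')) - ((r:ℤ) - r') := by ring
        rw [h3]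
        exact dvd_sub ((pow_dvd_pow _ (by omega : e + 1 ≤ E + 1) : ((p:ℤ)^(e+1) ∣ _)).trans hdvdP) hdvd3
      have := (val_dvd_iff hp hsubne (e+1)).1 hdvd4
      omega
  -- surjectivity
  have hsurj := Finset.surj_on_of_inj_on_of_card_le (s := A ×ˢ T₀) (t := range P)
      (fun q _ => rr p (E+1) (q.1 + q.2))
      (fun q _ => Finset.mem_range.2 (rr_lt hppos _ _))
      (fun q q' hq hq' h => hinj q hq q' hq' h)
      (by rw [hprodcard, Finset.card_range])
  intro n
  obtain ⟨⟨a, r⟩, hmem, hfr⟩ := hsurj (rr p (E+1) n) (Finset.mem_range.2 (rr_lt hppos _ n))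
  replace hfr := hfr.symm
  rw [Finset.mem_product] at hmem
  obtain ⟨haA, hrT⟩ := hmem
  rw [hT₀, Finset.mem_filter, Finset.mem_range] at hrT
  simp only at hfr
  set t := n - a with ht
  have hrr_t : rr p (E+1) t = r := by
    have hd : (p:ℤ)^(E+1) ∣ (a + r) - n := (rr_eq_iff hppos).1 hfr
    have hd2 : (p:ℤ)^(E+1) ∣ t - r := by
      have : t - (r:ℤ) = -((a + r) - n) := by rw [ht]; ring
      rw [this]
      exact dvd_neg.2 hd
    have := (rr_eq_iff hppos).2 hd2
    rw [this, rr_natCast hppos (by exact hrT.1 : r < p ^ (E+1))]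
  refine ⟨(a, t), ⟨haA, ?_, by rw [ht]; ring⟩, ?_⟩
  · intro e he
    simp only
    rw [hrr_t]
    exact hrT.2 e he
  · rintro ⟨a', t'⟩ hq'
    apply uniq n _ _ hq'
    refine ⟨haA, ?_, by rw [ht]; ring⟩
    intro e he
    simp only
    rw [hrr_t]
    exact hrT.2 e he

lemma exists_finite_tiling {A : Finset ℤ} (hA : A.Nonempty) (hTz : TilesZ A) (P : ℕ)
    (hP : 0 < P) :
    ∃ (n : ℕ) (T₀ : Finset ℤ), 0 < n ∧ P ∣ n ∧
      ∀ ρ ∈ Finset.range n, ∃! q : ℤ × ℤ, (q ∈ A ×ˢ T₀ ∧ ((q.1 + q.2) % (n:ℤ)).toNat = ρ) := by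
  classical
  obtain ⟨T, hT⟩ := hTz
  set lo := A.min' hA with hlo
  set hi := A.max' hA with hhi
  have hlohi : lo ≤ hi := A.min'_le _ (A.max'_mem hA)
  set D : ℕ := (hi - lo + 1).toNat with hD
  have hDZ : (D:ℤ) = hi - lo + 1 := Int.toNat_of_nonneg (by omega)
  have hDpos : 0 < D := by omega
  -- membership characterization via the cover of z + lo
  have mem_iff : ∀ z : ℤ, z ∈ T ↔ ¬ ∃ a ∈ A, ∃ t ∈ T, a + t = z + lo ∧ t < z := by
    intro z
    constructor
    · intro hz
      rintro ⟨a, ha, t, ht, hat, hlt⟩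
      obtain ⟨q, hq, huniq⟩ := hT (z + lo)
      have h1 := huniq (lo, z) ⟨A.min'_mem hA, hz, by ring⟩
      have h2 := huniq (a, t) ⟨ha, ht, hat⟩
      rw [← h1] at h2
      have : t = z := congrArg Prod.snd h2
      omega
    · intro hno
      obtain ⟨⟨a, t⟩, ⟨ha, ht, hat⟩, -⟩ := hT (z + lo)
      simp only at ha ht hat
      have hla : lo ≤ a := A.min'_le a ha
      have hta : t ≤ z := by omega
      by_cases htz : t < z
      · exact absurd ⟨a, ha, t, ht, hat, htz⟩ hno
      · have : t = z := by omega
        rwa [this] at ht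
  -- pigeonhole on windows
  set F : ℕ → (Fin D → Bool) := fun k => fun i => decide ((P:ℤ) * k + (i:ℤ) ∈ T) with hF
  obtain ⟨k, l, hord, hFkl⟩ : ∃ k l : ℕ, k < l ∧ F k = F l := by
    obtain ⟨k₀, l₀, hkl, hFkl⟩ := Finite.exists_ne_map_eq_of_infinite F
    rcases Nat.lt_or_ge k₀ l₀ with hord | hord
    · exact ⟨k₀, l₀, hord, hFkl⟩
    · exact ⟨l₀, k₀, by omega, hFkl.symm⟩
  set x : ℤ := (P:ℤ) * k with hx
  set y : ℤ := (P:ℤ) * l with hy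
  have hcpos : (0:ℤ) < y - x := by
    rw [hx, hy]
    have : (k:ℤ) < l := by exact_mod_cast hord
    have hPZ : (0:ℤ) < (P:ℤ) := by exact_mod_cast hP
    nlinarith
  set c : ℤ := y - x with hc
  have hPdvd : (P:ℤ) ∣ c := by
    rw [hc, hx, hy, ← mul_sub]
    exact Dvd.intro _ rfl
  have hwindow : ∀ d : ℕ, d < D → ((x + d ∈ T) ↔ (y + d ∈ T)) := by
    intro d hd
    have := congrFun hFkl ⟨d, hd⟩
    simp only [hF, decide_eq_decide] at this
    exact this
  -- rigidity: forward periodicity by strong induction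
  have per : ∀ m : ℕ, ((x + (m:ℤ)) ∈ T ↔ (x + (m:ℤ) + c) ∈ T) := by
    intro m
    induction m using Nat.strong_induction_on with
    | _ m IH =>
      by_cases hm : m < D
      · have := hwindow m hm
        rwa [show y + (m:ℤ) = x + m + c by rw [hc]; ring] at this
      · push_neg at hm
        rw [mem_iff (x + m), mem_iff (x + m + c)]
        have hDm : (D:ℤ) ≤ (m:ℤ) := by exact_mod_cast hm
        constructor
        · intro hno
          intro hex
          apply hno
          obtain ⟨a, ha, t', ht', hat, hlt⟩ := hex
          have hahi : a ≤ hi := A.le_max' a ha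
          have halo : lo ≤ a := A.min'_le a ha
          have hbound : x + (m:ℤ) + c - D < t' := by omega
          set mt := (t' - c - x).toNat with hmt
          have hmtZ : (mt:ℤ) = t' - c - x := Int.toNat_of_nonneg (by omega)
          have hmtlt : mt < m := by omega
          have hIH := IH mt hmtlt
          rw [show x + (mt:ℤ) = t' - c by omega, show t' - c + c = t' by ring] at hIH
          exact ⟨a, ha, t' - c, hIH.2 ht', by omega, by omega⟩
        · intro hno
          intro hex
          apply hno
          obtain ⟨a, ha, t, ht, hat, hlt⟩ := hex
          have hahi : a ≤ hi := A.le_max' a ha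
          have halo : lo ≤ a := A.min'_le a ha
          have hbound : x + (m:ℤ) - D < t := by omega
          set mt := (t - x).toNat with hmt
          have hmtZ : (mt:ℤ) = t - x := Int.toNat_of_nonneg (by omega)
          have hmtlt : mt < m := by omega
          have hIH := IH mt hmtlt
          rw [show x + (mt:ℤ) = t by omega] at hIH
          exact ⟨a, ha, t + c, hIH.1 ht, by omega, by omega⟩
  have per1 : ∀ z : ℤ, x ≤ z → (z ∈ T ↔ z + c ∈ T) := by
    intro z hz
    have := per (z - x).toNat
    rwa [show x + ((z - x).toNat : ℤ) = z by
      have := Int.toNat_of_nonneg (by omega : (0:ℤ) ≤ z - x); omega] at this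
  have per' : ∀ (j : ℕ) (z : ℤ), x ≤ z → (z ∈ T ↔ z + c * j ∈ T) := by
    intro j
    induction j with
    | zero => intro z hz; simp
    | succ j ih =>
      intro z hz
      have h1 := per1 z hz
      have h2 := ih (z + c) (by omega)
      rw [show z + c * (j+1 : ℕ) = (z + c) + c * j by push_cast; ring]
      exact h1.trans h2
  -- the finite tiling
  refine ⟨c.toNat, (Finset.Ico x (x + c)).filter (· ∈ T), by omega, ?_, ?_⟩
  · rw [← Int.natCast_dvd_natCast]
    rwa [Int.toNat_of_nonneg (by omega)]
  intro ρ hρ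
  rw [Finset.mem_range] at hρ
  have hcn : ((c.toNat : ℕ) : ℤ) = c := Int.toNat_of_nonneg (by omega)
  have hρc : (ρ : ℤ) < c := by
    rw [← hcn]; exact_mod_cast hρ
  -- existence
  set w : ℤ := (ρ : ℤ) with hw
  set K : ℕ := (x + hi - w).toNat with hK
  set z : ℤ := w + c * K with hz
  have hzbig : x + hi ≤ z := by
    rcases le_or_gt (x + hi - w) 0 with h | h
    · have : K = 0 := by rw [hK]; omega
      rw [hz, this]
      simp
      omega
    · have hKZ : (K:ℤ) = x + hi - w := Int.toNat_of_nonneg (by omega)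
      have h1 : (K:ℤ) ≤ c * K := le_mul_of_one_le_left (by omega) (by omega)
      rw [hz]
      omega
  obtain ⟨⟨a, t⟩, ⟨ha, ht, hat⟩, -⟩ := hT z
  simp only at ha ht hat
  have hahi : a ≤ hi := A.le_max' a ha
  have halo : lo ≤ a := A.min'_le a ha
  have htx : x ≤ t := by omega
  set j : ℤ := (t - x) / c with hj
  have hjnn : 0 ≤ j := Int.ediv_nonneg (by omega) (by omega)
  set t' : ℤ := x + (t - x) % c with ht'
  have hmod := Int.mul_ediv_add_emod (t - x) c
  have hmodnn : 0 ≤ (t - x) % c := Int.emod_nonneg _ (by omega)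
  have hmodlt : (t - x) % c < c := Int.emod_lt_of_pos _ (by omega)
  have htt' : t = t' + c * j := by rw [ht', hj]; omega
  have hjt : (j.toNat : ℤ) = j := Int.toNat_of_nonneg hjnn
  have ht'T : t' ∈ T := by
    have := per' j.toNat t' (by rw [ht']; omega)
    rw [hjt, ← htt'] at this
    exact this.2 ht
  have ht'mem : t' ∈ (Finset.Ico x (x + c)).filter (· ∈ T) := by
    rw [Finset.mem_filter, Finset.mem_Ico]
    exact ⟨⟨by rw [ht']; omega, by rw [ht']; omega⟩, ht'T⟩
  have hemod : (a + t') % c = w := by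
    have h1 : a + t' = z - c * j := by omega
    rw [h1]
    have h2 : (z - c * j) % c = z % c := by
      conv_rhs => rw [show z = (z - c * j) + c * j by ring]
      rw [Int.add_mul_emod_self_left]
    rw [h2, hz, Int.add_mul_emod_self_left, Int.emod_eq_of_lt (by omega) hρc]
  refine ⟨(a, t'), ⟨?_, ?_⟩, ?_⟩
  · rw [Finset.mem_product]
    exact ⟨ha, ht'mem⟩
  · simp only
    rw [hcn, hemod, hw]
    exact Int.toNat_natCast ρ
  -- uniqueness
  rintro ⟨b, s⟩ ⟨hmem, hρs⟩
  rw [Finset.mem_product, Finset.mem_filter, Finset.mem_Ico] at hmem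
  obtain ⟨hbA, ⟨hsx, hsxc⟩, hsT⟩ := hmem
  simp only at hρs
  rw [hcn] at hρs
  -- both congruent mod c
  have hcong : (b + s) % c = (a + t') % c := by
    have h1 : 0 ≤ (b + s) % c := Int.emod_nonneg _ (by omega)
    rw [hemod, hw, ← hρs, Int.toNat_of_nonneg h1]
  have hdvd : c ∣ (a + t') - (b + s) := by
    rw [Int.dvd_iff_emod_eq_zero, Int.sub_emod, hcong, sub_self, Int.zero_emod]
  obtain ⟨d, hd⟩ := hdvd
  have ht'x : x ≤ t' := by rw [ht']; omega
  have ht'xc : t' < x + c := by rw [ht']; omega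
  rcases le_or_gt 0 d with hdnn | hdneg
  · -- b + s + c*d = a + t'
    have hdt : (d.toNat : ℤ) = d := Int.toNat_of_nonneg hdnn
    have hsT' : s + c * d ∈ T := by
      have := per' d.toNat s hsx
      rw [hdt] at this
      exact this.1 hsT
    obtain ⟨q, hq, huniq⟩ := hT (a + t')
    have h1 := huniq (a, t') ⟨ha, ht'T, rfl⟩
    have h2 := huniq (b, s + c * d) ⟨hbA, hsT', by omega⟩
    rw [← h1] at h2
    have hba : b = a := congrArg Prod.fst h2
    have hst : s + c * d = t' := congrArg Prod.snd h2
    have hd0 : d = 0 := by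
      by_contra hd0
      have hd1 : 1 ≤ d := by omega
      have : c ≤ c * d := le_mul_of_one_le_right (by omega) hd1
      omega
    rw [hd0] at hst
    simp at hst
    rw [hba, hst]
  · -- impossible case
    exfalso
    have h1 : 1 ≤ -d := by omega
    have h2 : c ≤ c * (-d) := le_mul_of_one_le_right (by omega) h1
    have hndt : ((-d).toNat : ℤ) = -d := Int.toNat_of_nonneg (by omega)
    have htT2 : t' + c * (-d) ∈ T := by
      have := per' (-d).toNat t' ht'x
      rw [hndt] at this
      exact this.1 ht'T
    have hcd : c * (-d) = -(c * d) := by ring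
    obtain ⟨q, hq, huniq⟩ := hT (b + s)
    have hh1 := huniq (b, s) ⟨hbA, hsT, rfl⟩
    have hh2 := huniq (a, t' + c * (-d)) ⟨ha, htT2, by omega⟩
    rw [← hh1] at hh2
    have hst : t' + c * (-d) = s := congrArg Prod.snd hh2
    omega

lemma exp_congr_dvd {n : ℕ} {u v : ℕ} (h : u % n = v % n) :
    ((X:ℤ[X])^n - 1) ∣ (X:ℤ[X])^u - X^v := by
  rcases le_total u v with huv | huv
  · obtain ⟨k, hk⟩ : ∃ k, v = u + n * k := by
      have hd : n ∣ v - u := (Nat.modEq_iff_dvd' huv).1 h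
      obtain ⟨k, hk⟩ := hd
      exact ⟨k, by omega⟩
    subst hk
    have h2 : (X:ℤ[X])^u - X^(u + n * k) = -(X^u * (((X^n)^k) - 1)) := by
      rw [pow_add, pow_mul]
      ring
    rw [h2]
    apply Dvd.dvd.neg_right
    exact Dvd.dvd.mul_left (by simpa using sub_dvd_pow_sub_pow ((X:ℤ[X])^n) 1 k) _
  · obtain ⟨k, hk⟩ : ∃ k, u = v + n * k := by
      have hd : n ∣ u - v := (Nat.modEq_iff_dvd' huv).1 h.symm
      obtain ⟨k, hk⟩ := hd
      exact ⟨k, by omega⟩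
    subst hk
    have h2 : (X:ℤ[X])^(v + n * k) - X^v = X^v * (((X^n)^k) - 1) := by
      rw [pow_add, pow_mul]
      ring
    rw [h2]
    exact Dvd.dvd.mul_left (by simpa using sub_dvd_pow_sub_pow ((X:ℤ[X])^n) 1 k) _

/-- counting prime-power cyclotomic divisors -/

lemma pow_card_dvd_eval_one {p : ℕ} (hp : p.Prime) (W : Finset ℕ) (hW : ∀ j ∈ W, 0 < j)
    (F : ℤ[X]) (hdvd : ∀ j ∈ W, (cyclotomic (p^j) ℤ) ∣ F) :
    ((p:ℤ))^W.card ∣ F.eval 1 := by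
  have hmap : ∀ j ∈ W, (cyclotomic (p^j) ℚ) ∣ F.map (Int.castRingHom ℚ) := by
    intro j hj
    have := map_dvd (mapRingHom (Int.castRingHom ℚ)) (hdvd j hj)
    simpa [map_cyclotomic] using this
  have hprod : (∏ j ∈ W, cyclotomic (p^j) ℚ) ∣ F.map (Int.castRingHom ℚ) := by
    apply Finset.prod_dvd_of_coprime
    · intro i hi j hj hij
      apply Polynomial.cyclotomic.isCoprime_rat
      exact fun h => hij (Nat.pow_right_injective hp.two_le h)
    · exact fun i hi => hmap i hi
  have hmono : (∏ j ∈ W, cyclotomic (p^j) ℤ).Monic :=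
    monic_prod_of_monic _ _ (fun j _ => cyclotomic.monic _ ℤ)
  have hZ : (∏ j ∈ W, cyclotomic (p^j) ℤ) ∣ F := by
    rw [← Polynomial.map_dvd_map (Int.castRingHom ℚ) (fun a b h => by simpa using h) hmono]
    rwa [Polynomial.map_prod, (by ext; simp [map_cyclotomic] : 
      (fun j => (cyclotomic (p^j) ℤ).map (Int.castRingHom ℚ)) = fun j => cyclotomic (p^j) ℚ)]
  obtain ⟨G, hG⟩ := hZ
  rw [hG, eval_mul, eval_prod]
  apply Dvd.dvd.mul_right
  have : ∀ j ∈ W, eval 1 (cyclotomic (p^j) ℤ) = (p:ℤ) := by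
    intro j hj
    have h1 := hW j hj
    obtain ⟨i, rfl⟩ : ∃ i, j = i + 1 := ⟨j - 1, by omega⟩
    haveI : Fact p.Prime := ⟨hp⟩
    exact eval_one_cyclotomic_prime_pow i
  rw [Finset.prod_congr rfl this, Finset.prod_const]

lemma bal_of_cyclotomic_dvd {p : ℕ} (hp : p.Prime) {A : Finset ℤ} {j : ℕ} (ea : ℤ → ℕ)
    (hea : ∀ a ∈ A, ea a % p^(j+1) = rr p (j+1) a)
    (hdvd : (cyclotomic (p^(j+1)) ℤ) ∣ ∑ a ∈ A, (X:ℤ[X])^(ea a)) : Bal p A j := by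
  have hppos := hp.pos
  have hpj : 0 < p ^ j := Nat.pow_pos hppos
  set Φ := cyclotomic (p^(j+1)) ℤ with hΦ
  have hΦmonic : Φ.Monic := cyclotomic.monic _ ℤ
  set Fj : ℤ[X] := ∑ a ∈ A, (X:ℤ[X])^(rr p (j+1) a) with hFj
  have h1 : ((X:ℤ[X])^(p^(j+1)) - 1) ∣ (∑ a ∈ A, (X:ℤ[X])^(ea a)) - Fj := by
    rw [hFj, ← Finset.sum_sub_distrib]
    apply Finset.dvd_sum
    intro a ha
    apply exp_congr_dvd
    rw [hea a ha, Nat.mod_eq_of_lt (rr_lt hppos _ a)]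
  have h2 : Φ ∣ (X:ℤ[X])^(p^(j+1)) - 1 := cyclotomic.dvd_X_pow_sub_one _ ℤ
  have hΦFj : Φ ∣ Fj := by
    have heq : Fj = (∑ a ∈ A, (X:ℤ[X])^(ea a)) - ((∑ a ∈ A, (X:ℤ[X])^(ea a)) - Fj) := by ring
    rw [heq]
    exact dvd_sub hdvd (h2.trans h1)
  have hcoeff : ∀ σ : ℕ, Fj.coeff σ = (cnt p A (j+1) σ : ℤ) := by
    intro σ
    rw [hFj, Polynomial.finset_sum_coeff, cnt, Finset.card_filter]
    push_cast
    apply Finset.sum_congr rfl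
    intro a _
    rw [coeff_X_pow]
    by_cases h : rr p (j+1) a = σ
    · simp [h]
    · simp [h, Ne.symm h]
  set d := Fj /ₘ Φ with hd
  have hFd : Fj = Φ * d := by
    have hh := modByMonic_add_div Fj Φ
    rw [(modByMonic_eq_zero_iff_dvd hΦmonic).2 hΦFj] at hh
    simpa using hh.symm
  by_cases hd0 : d = 0
  · intro σ τ hσ hτ hmod
    have hz : ∀ σ' : ℕ, (cnt p A (j+1) σ' : ℤ) = 0 := by
      intro σ'
      rw [← hcoeff σ', hFd, hd0, mul_zero, Polynomial.coeff_zero]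
    have z1 := hz σ
    have z2 := hz τ
    omega
  · have hΦne : Φ ≠ 0 := hΦmonic.ne_zero
    have hdegΦ : Φ.natDegree = p^j * (p - 1) := by
      rw [hΦ, natDegree_cyclotomic, Nat.totient_prime_pow hp (by omega : 0 < j+1)]
      congr 1
    have hdegFj : Fj.natDegree ≤ p^(j+1) - 1 := by
      rw [hFj]
      apply natDegree_sum_le_of_forall_le
      intro a _
      rw [natDegree_X_pow]
      have := rr_lt hppos (j+1) a
      omega
    have hdegd : d.natDegree < p ^ j := by
      have hmul := natDegree_mul hΦne hd0
      rw [← hFd] at hmul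
      have hle : Φ.natDegree + d.natDegree ≤ p^(j+1) - 1 := by omega
      rw [hdegΦ] at hle
      have hps : p ^ (j+1) = p^j * p := pow_succ p j
      have hsplit : p ^ j * (p - 1) + p ^ j = p ^ j * p := by
        rw [← Nat.mul_succ]
        congr 1
        have := hp.two_le
        omega
      omega
    have hgeom : Φ = ∑ i ∈ range p, ((X:ℤ[X])^(p^j))^i := by
      rw [hΦ]
      exact cyclotomic_prime_pow_eq_geom_sum hp
    have hkey : ∀ i, i < p → ∀ ρ, ρ < p ^ j → Fj.coeff (i * p^j + ρ) = d.coeff ρ := by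
      intro i hi ρ hρ
      rw [hFd, hgeom, Finset.sum_mul, Polynomial.finset_sum_coeff]
      have hterm : ∀ i' ∈ range p, ((((X:ℤ[X])^(p^j))^i') * d).coeff (i * p^j + ρ) =
          if i' = i then d.coeff ρ else 0 := by
        intro i' hi'
        rw [Finset.mem_range] at hi'
        rw [← pow_mul, mul_comm ((X:ℤ[X])^(p^j * i')) d, coeff_mul_X_pow']
        have hc1 : p ^ j * i' = i' * p ^ j := mul_comm _ _
        have hc2 : p ^ j * i = i * p ^ j := mul_comm _ _
        by_cases hii : i' = i
        · subst hii
          rw [if_pos (by omega), if_pos rfl]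
          congr 1
          omega
        · rw [if_neg hii]
          rcases Nat.lt_or_ge i' i with hlt | hgt
          · have e1 : (i' + 1) * p ^ j ≤ i * p ^ j := Nat.mul_le_mul_right _ (by omega)
            have e2 : (i' + 1) * p ^ j = i' * p ^ j + p ^ j := by ring
            rw [if_pos (by omega)]
            apply coeff_eq_zero_of_natDegree_lt
            omega
          · have hgt' : i < i' := by omega
            have e1 : (i + 1) * p ^ j ≤ i' * p ^ j := Nat.mul_le_mul_right _ (by omega)
            have e2 : (i + 1) * p ^ j = i * p ^ j + p ^ j := by ring
            rw [if_neg (by omega)]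
      rw [Finset.sum_congr rfl hterm, Finset.sum_ite_eq' (range p) i (fun _ => d.coeff ρ),
        if_pos (Finset.mem_range.2 hi)]
    intro σ τ hσ hτ hmod
    have hρ : σ % p ^ j < p ^ j := Nat.mod_lt _ hpj
    have hiσ : σ / p ^ j < p := by
      rw [Nat.div_lt_iff_lt_mul hpj]
      calc σ < p ^ (j+1) := hσ
      _ = p * p ^ j := by rw [pow_succ]; ring
    have hiτ : τ / p ^ j < p := by
      rw [Nat.div_lt_iff_lt_mul hpj]
      calc τ < p ^ (j+1) := hτ
      _ = p * p ^ j := by rw [pow_succ]; ring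
    have hσdec : σ = (σ / p ^ j) * p ^ j + σ % p ^ j := by
      rw [mul_comm]
      exact (Nat.div_add_mod _ _).symm
    have hτdec : τ = (τ / p ^ j) * p ^ j + τ % p ^ j := by
      rw [mul_comm]
      exact (Nat.div_add_mod _ _).symm
    have k1 := hkey (σ / p ^ j) hiσ (σ % p ^ j) hρ
    have k2 := hkey (τ / p ^ j) hiτ (τ % p ^ j) (by rw [← hmod]; exact hρ)
    rw [← hσdec] at k1
    rw [← hτdec] at k2
    have hZ : (cnt p A (j+1) σ : ℤ) = (cnt p A (j+1) τ : ℤ) := by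
      rw [← hcoeff σ, ← hcoeff τ, k1, k2, hmod]
    exact_mod_cast hZ

lemma emod_nonneg' {n : ℕ} (hn : 0 < n) (a : ℤ) : 0 ≤ a % (n:ℤ) :=
  Int.emod_nonneg a (by exact_mod_cast hn.ne')

lemma emod_lt' {n : ℕ} (hn : 0 < n) (a : ℤ) : a % (n:ℤ) < (n:ℤ) :=
  Int.emod_lt_of_pos a (by exact_mod_cast hn)

lemma toNat_emod_lt {n : ℕ} (hn : 0 < n) (a : ℤ) : (a % (n:ℤ)).toNat < n := by
  have := emod_nonneg' hn a
  have := emod_lt' hn a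
  omega

lemma toNat_emod_add {n : ℕ} (hn : 0 < n) (a t : ℤ) :
    ((a % (n:ℤ)).toNat + (t % (n:ℤ)).toNat) % n = ((a + t) % (n:ℤ)).toNat % n := by
  apply Int.natCast_inj.mp
  push_cast [Int.toNat_of_nonneg (emod_nonneg' hn a), Int.toNat_of_nonneg (emod_nonneg' hn t),
    Int.toNat_of_nonneg (emod_nonneg' hn (a+t))]
  rw [← Int.add_emod, Int.emod_emod_of_dvd _ dvd_rfl]

lemma emod_toNat_mod {n m : ℕ} (hm : 0 < m) (hn : 0 < n) (hmn : m ∣ n) (a : ℤ) :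
    ((a % (n:ℤ)).toNat) % m = (a % (m:ℤ)).toNat := by
  apply Int.natCast_inj.mp
  push_cast [Int.toNat_of_nonneg (emod_nonneg' hn a), Int.toNat_of_nonneg (emod_nonneg' hm a)]
  exact Int.emod_emod_of_dvd a (by exact_mod_cast hmn)

theorem necessity {p α : ℕ} (hp : p.Prime) (hα : 0 < α) {A : Finset ℤ}
    (hcard : A.card = p ^ α) (hTz : TilesZ A) : (vS p A).card ≤ α := by
  classical
  by_contra hgt
  push_neg at hgt
  have hA : A.Nonempty := Finset.card_pos.1 (by rw [hcard]; exact Nat.pow_pos (n := α) hp.pos)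
  have h2card : 1 < A.card := by
    rw [hcard]
    calc 1 < p := hp.one_lt
    _ = p ^ 1 := (pow_one p).symm
    _ ≤ p ^ α := Nat.pow_le_pow_right hp.pos hα
  obtain ⟨a₀, ha₀, b₀, hb₀, hab₀⟩ := Finset.one_lt_card.1 h2card
  have hSne : (vS p A).Nonempty := ⟨_, val_mem_vS ha₀ hb₀ hab₀⟩
  set E := (vS p A).max' hSne with hE
  have hEle : ∀ e ∈ vS p A, e ≤ E := fun e he => Finset.le_max' _ e he
  obtain ⟨n, T₀, hn, hPn, htile⟩ :=
    exists_finite_tiling hA hTz (p^(E+1)) (Nat.pow_pos hp.pos)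
  set f : ℤ × ℤ → ℕ := fun q => ((q.1 + q.2) % (n:ℤ)).toNat with hf
  have hmapsto : ∀ q ∈ A ×ˢ T₀, f q ∈ range n := fun q _ =>
    Finset.mem_range.2 (toNat_emod_lt hn _)
  have hinj : ∀ q ∈ A ×ˢ T₀, ∀ q' ∈ A ×ˢ T₀, f q = f q' → q = q' := by
    intro q hq q' hq' heq
    obtain ⟨w, hw, huniq⟩ := htile (f q) (hmapsto q hq)
    rw [huniq q ⟨hq, rfl⟩, huniq q' ⟨hq', heq.symm⟩]
  have hsurj : ∀ ρ ∈ range n, ∃ q ∈ A ×ˢ T₀, f q = ρ := by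
    intro ρ hρ
    obtain ⟨q, ⟨hq, hfq⟩, -⟩ := htile ρ hρ
    exact ⟨q, hq, hfq⟩
  have hprodcard : (A ×ˢ T₀).card = n := by
    rw [← Finset.card_range n]
    apply Finset.card_bij (fun q _ => f q) hmapsto
    · intro q hq q' hq' heq
      exact hinj q hq q' hq' heq
    · intro ρ hρ
      obtain ⟨q, hq, hfq⟩ := hsurj ρ hρ
      exact ⟨q, hq, hfq⟩
  set F : ℤ[X] := ∑ a ∈ A, X ^ ((a % (n:ℤ)).toNat) with hF
  set G : ℤ[X] := ∑ t ∈ T₀, X ^ ((t % (n:ℤ)).toNat) with hG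
  have hFG : ((X:ℤ[X])^n - 1) ∣ F * G - ∑ ρ ∈ range n, X^ρ := by
    have hsum : F * G = ∑ q ∈ A ×ˢ T₀, (X:ℤ[X]) ^ (((q.1 % (n:ℤ)).toNat) + ((q.2 % (n:ℤ)).toNat)) := by
      rw [hF, hG, Finset.sum_mul_sum, Finset.sum_product]
      simp_rw [pow_add]
    have hgeom : (∑ ρ ∈ range n, (X:ℤ[X])^ρ) = ∑ q ∈ A ×ˢ T₀, (X:ℤ[X]) ^ (f q) := by
      symm
      apply Finset.sum_bij (fun q _ => f q) hmapsto hinj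
        (fun b hb => by obtain ⟨q, hq, hfq⟩ := hsurj b hb; exact ⟨q, hq, hfq⟩)
      intro q hq
      rfl
    rw [hsum, hgeom, ← Finset.sum_sub_distrib]
    apply Finset.dvd_sum
    intro q hq
    apply exp_congr_dvd
    exact toNat_emod_add hn q.1 q.2
  have hdich : ∀ k, 1 ≤ k → p^k ∣ n → (cyclotomic (p^k) ℤ ∣ F ∨ cyclotomic (p^k) ℤ ∣ G) := by
    intro k hk hkn
    have hΦprime : Prime (cyclotomic (p^k) ℤ) :=
      UniqueFactorizationMonoid.irreducible_iff_prime.1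
        (cyclotomic.irreducible (Nat.pow_pos hp.pos))
    have hΦgeom : cyclotomic (p^k) ℤ ∣ ∑ ρ ∈ range n, (X:ℤ[X])^ρ :=
      cyclotomic_dvd_geom_sum_of_dvd ℤ hkn (by
        intro h
        have := hp.one_lt
        have : p ≤ p ^ k := Nat.le_self_pow (by omega) p
        omega)
    have hΦxn : cyclotomic (p^k) ℤ ∣ (X:ℤ[X])^n - 1 := by
      obtain ⟨m, hm⟩ := hkn
      have h1 : ((X:ℤ[X])^(p^k) - 1) ∣ (X:ℤ[X])^n - 1 := by
        rw [hm, pow_mul]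
        simpa using sub_dvd_pow_sub_pow ((X:ℤ[X])^(p^k)) 1 m
      exact (cyclotomic.dvd_X_pow_sub_one _ ℤ).trans h1
    have hΦFG : cyclotomic (p^k) ℤ ∣ F * G := by
      have heq : F * G = (F * G - ∑ ρ ∈ range n, (X:ℤ[X])^ρ) + ∑ ρ ∈ range n, (X:ℤ[X])^ρ := by
        ring
      rw [heq]
      exact dvd_add (hΦxn.trans hFG) hΦgeom
    exact hΦprime.2.2 _ _ hΦFG
  have hFeval : F.eval 1 = (A.card : ℤ) := by
    rw [hF, Polynomial.eval_finset_sum]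
    simp
  have hGeval : G.eval 1 = (T₀.card : ℤ) := by
    rw [hG, Polynomial.eval_finset_sum]
    simp
  set γ := n.factorization p with hγ
  have hγE : E + 1 ≤ γ := (Nat.Prime.pow_dvd_iff_le_factorization hp hn.ne').1 hPn
  set J := (Finset.Icc 1 γ).filter (fun k => cyclotomic (p^k) ℤ ∣ F) with hJ
  set K := (Finset.Icc 1 γ).filter (fun k => ¬ cyclotomic (p^k) ℤ ∣ F) with hK
  have hJK : J.card + K.card = γ := by
    rw [hJ, hK, Finset.card_filter_add_card_filter_not, Nat.card_Icc]
    omega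
  have hpowdvd : ∀ k, k ≤ γ → p ^ k ∣ n := fun k hk =>
    (pow_dvd_pow p hk).trans (Nat.ordProj_dvd n p)
  have hJα : J.card ≤ α := by
    have h1 := pow_card_dvd_eval_one hp J
      (fun j hj => by rw [hJ, Finset.mem_filter, Finset.mem_Icc] at hj; omega) F
      (fun j hj => by rw [hJ, Finset.mem_filter] at hj; exact hj.2)
    rw [hFeval, hcard] at h1
    have h2 : (p:ℤ)^J.card ∣ ((p^α : ℕ) : ℤ) := by exact_mod_cast h1
    have h3 : (p^J.card : ℕ) ∣ (p^α : ℕ) := by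
      have : (((p^J.card : ℕ)) : ℤ) ∣ ((p^α : ℕ) : ℤ) := by push_cast; exact_mod_cast h2
      exact_mod_cast this
    exact (Nat.pow_dvd_pow_iff_le_right hp.one_lt).1 h3
  have hKbound : α + K.card ≤ γ := by
    have h1 := pow_card_dvd_eval_one hp K
      (fun j hj => by rw [hK, Finset.mem_filter, Finset.mem_Icc] at hj; omega) G
      (fun j hj => by
        rw [hK, Finset.mem_filter, Finset.mem_Icc] at hj
        rcases hdich j (by omega) (hpowdvd j (by omega)) with h | h
        · exact absurd h hj.2
        · exact h)
    rw [hGeval] at h1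
    have h3 : (p^K.card : ℕ) ∣ T₀.card := by
      have : (((p^K.card : ℕ)) : ℤ) ∣ (T₀.card : ℤ) := by push_cast; exact_mod_cast h1
      exact_mod_cast this
    have h4 : (p ^ (α + K.card)) ∣ n := by
      rw [← hprodcard, Finset.card_product, hcard, pow_add]
      exact mul_dvd_mul dvd_rfl h3
    exact (Nat.Prime.pow_dvd_iff_le_factorization hp hn.ne').1 h4
  have hJeq : J.card = α := by omega
  -- balance for levels in J
  have hbalJ : ∀ j ∈ J, Bal p A (j - 1) := by
    intro j hj
    rw [hJ, Finset.mem_filter, Finset.mem_Icc] at hj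
    obtain ⟨⟨hj1, hjγ⟩, hjdvd⟩ := hj
    obtain ⟨i, rfl⟩ : ∃ i, j = i + 1 := ⟨j - 1, by omega⟩
    have hij : i + 1 - 1 = i := by omega
    rw [hij]
    apply bal_of_cyclotomic_dvd hp (fun a => (a % (n:ℤ)).toNat)
    · intro a _
      have hd : p ^ (i+1) ∣ n := hpowdvd _ hjγ
      have hh := emod_toNat_mod (Nat.pow_pos (n := (i+1)) hp.pos) hn hd a
      rw [hh, rr, Nat.cast_pow]
    · exact hjdvd
  set J' := J.image (fun j => j - 1) with hJ'
  have hJ'card : J'.card = α := by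
    rw [hJ', Finset.card_image_of_injOn, hJeq]
    intro a ha b hb hab
    rw [Finset.mem_coe, hJ, Finset.mem_filter, Finset.mem_Icc] at ha hb
    simp only at hab
    omega
  have hJ'sub : J' ⊆ vS p A := by
    intro e he
    rw [hJ', Finset.mem_image] at he
    obtain ⟨j, hj, rfl⟩ := he
    have hb := hbalJ j hj
    exact mem_vS_of_bal hp hA hb
  have hbal' : ∀ e ∈ J', (Rset p A e).card * p ≤ (Rset p A (e+1)).card := by
    intro e he
    rw [hJ', Finset.mem_image] at he
    obtain ⟨j, hj, rfl⟩ := he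
    exact ell_full_of_bal hp (hbalJ j hj)
  obtain ⟨e, hevS, heJ'⟩ : ∃ e ∈ vS p A, e ∉ J' := by
    by_contra hc
    push_neg at hc
    have : vS p A ⊆ J' := hc
    have := Finset.card_le_card this
    omega
  have hres := necessity_count hp hbal' hevS heJ' (hEle e hevS)
  rcases hres with h | h
  · rw [ell_top hp hEle, hcard, hJ'card] at h
    omega
  · apply h
    intro e' he'
    rw [Finset.mem_range]
    exact Nat.lt_succ_of_le (hEle e' (hJ'sub he'))

end Newman

/-- Newman's theorem on tilings of the integers by sets of prime-power cardinality. -/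
theorem stmt1 (p α : ℕ) (hp : p.Prime) (hα : 0 < α) (A : Finset ℤ)
    (hcard : A.card = p ^ α) :
    TilesZ A ↔
      (((A ×ˢ A).filter (fun q => q.1 ≠ q.2)).image
        (fun q => padicValInt p (q.1 - q.2))).card ≤ α := by
  constructor
  · intro h
    exact Newman.necessity hp hα hcard h
  · intro h
    exact Newman.sufficiency hp hα hcard h
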